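/- Let ⊗ be the tensor product of a closed symmetric monoidal structure on the category Graph of reflexive graphs, and for a, a' ∈ {s, t} let (a,a') : I_0 → I_1 ⊗ I_1 denote the composite of the unit isomorphism I_0 ≅ I_0 ⊗ I_0 with a ⊗ a'. Then the four morphisms (s,s), (s,t), (t,s), (t,t) are pairwise distinct; i.e., no vertex of I_1 ⊗ I_1 carries more than one label. -/

import Mathlib

open CategoryTheory MonoidalCategory

/-- The category of (reflexive) graphs: an object is a set of vertices with an
irreflexive symmetric adjacency relation. -/
structure GraphCat : Type 1 where
  V : Type
  adj : V → V → Prop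
  symm : ∀ {v w : V}, adj v w → adj w v
  loopless : ∀ v : V, ¬ adj v v

namespace GraphCat

/-- A graph map: whenever `v ∼ w`, either `f v = f w` or `f v ∼ f w`. -/
structure Hom (X Y : GraphCat) where
  toFun : X.V → Y.V
  map_adj : ∀ {v w : X.V}, X.adj v w → toFun v = toFun w ∨ Y.adj (toFun v) (toFun w)

theorem Hom.ext' {X Y : GraphCat} {f g : Hom X Y} (h : f.toFun = g.toFun) : f = g := by
  cases f; cases g; cases h; rfl

instance : Category GraphCat where
  Hom := Hom
  id X := ⟨fun v => v, fun h => Or.inr h⟩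
  comp f g := ⟨fun v => g.toFun (f.toFun v), fun {v w} h => by
    rcases f.map_adj h with h' | h'
    · exact Or.inl (congrArg g.toFun h')
    · exact g.map_adj h'⟩
  id_comp f := Hom.ext' rfl
  comp_id f := Hom.ext' rfl
  assoc f g h := Hom.ext' rfl

/-- The one-vertex graph `I₀`. -/
def I0 : GraphCat := ⟨PUnit, fun _ _ => False, fun h => h, fun _ h => h⟩

/-- The graph `I₁` with two vertices `s = false` and `t = true` joined by an edge. -/
def I1 : GraphCat := ⟨Bool, fun v w => v ≠ w, Ne.symm, fun _ h => h rfl⟩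

/-- The vertex inclusions `s, t : I₀ ⟶ I₁` (`s` for `false`, `t` for `true`). -/
def vert (b : Bool) : I0 ⟶ I1 := ⟨fun _ => b, fun {_ _} h => h.elim⟩

section Labels

variable [MonoidalCategory GraphCat]

/-- Given a monoidal structure on graphs with unit `I₀`, the label morphism
`(a, a') : I₀ ⟶ I₁ ⊗ I₁` for `a, a' ∈ {s, t}` (encoded as booleans, `s = false`,
`t = true`): the composite of the unit isomorphism `I₀ ≅ I₀ ⊗ I₀` with `a ⊗ a'`. -/
def lab (hU : (𝟙_ GraphCat) = I0) (a a' : Bool) : I0 ⟶ (I1 ⊗ I1 : GraphCat) :=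
  eqToHom hU.symm ≫ (λ_ (𝟙_ GraphCat)).inv ≫
    ((eqToHom hU ≫ vert a) ⊗ₘ (eqToHom hU ≫ vert a'))

/-- The vertex of `I₁ ⊗ I₁` labelled `(a, a')`, i.e. the image of the morphism
`lab hU a a'`. -/
def vlab (hU : (𝟙_ GraphCat) = I0) (a a' : Bool) : (I1 ⊗ I1 : GraphCat).V :=
  (lab hU a a').toFun PUnit.unit

end Labels

end GraphCat

open GraphCat

section Aux

variable [MonoidalCategory GraphCat]

/-- The unique map to the one-vertex graph. -/
def toI0 (X : GraphCat) : X ⟶ I0 := ⟨fun _ => PUnit.unit, fun _ => Or.inl rfl⟩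

lemma unit_hom_eq (hU : (𝟙_ GraphCat) = I0) (f g : (𝟙_ GraphCat) ⟶ (𝟙_ GraphCat)) : f = g := by
  haveI : Subsingleton (𝟙_ GraphCat).V := by rw [hU]; exact ⟨fun a b => rfl⟩
  exact Hom.ext' (funext fun v => Subsingleton.elim _ _)

lemma labR (hU : (𝟙_ GraphCat) = I0) (a b : Bool) :
    lab hU a b ≫ ((𝟙 I1) ⊗ₘ (toI0 I1 ≫ eqToHom hU.symm)) ≫ (ρ_ I1).hom = vert a := by
  have h1 : (eqToHom hU ≫ vert b) ≫ (toI0 I1 ≫ eqToHom hU.symm) = 𝟙 (𝟙_ GraphCat) :=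
    unit_hom_eq hU _ _
  rw [lab, Category.assoc, Category.assoc]
  rw [← Category.assoc ((eqToHom hU ≫ vert a) ⊗ₘ (eqToHom hU ≫ vert b)),
    MonoidalCategory.tensorHom_comp_tensorHom, h1, Category.comp_id,
    MonoidalCategory.tensorHom_id, MonoidalCategory.rightUnitor_naturality,
    ← MonoidalCategory.unitors_equal, Iso.inv_hom_id_assoc, eqToHom_trans_assoc,
    eqToHom_refl, Category.id_comp]

lemma labL (hU : (𝟙_ GraphCat) = I0) (a b : Bool) :
    lab hU a b ≫ ((toI0 I1 ≫ eqToHom hU.symm) ⊗ₘ (𝟙 I1)) ≫ (λ_ I1).hom = vert b := by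
  have h1 : (eqToHom hU ≫ vert a) ≫ (toI0 I1 ≫ eqToHom hU.symm) = 𝟙 (𝟙_ GraphCat) :=
    unit_hom_eq hU _ _
  rw [lab, Category.assoc, Category.assoc]
  rw [← Category.assoc ((eqToHom hU ≫ vert a) ⊗ₘ (eqToHom hU ≫ vert b)),
    MonoidalCategory.tensorHom_comp_tensorHom, h1, Category.comp_id,
    MonoidalCategory.id_tensorHom, MonoidalCategory.leftUnitor_naturality,
    Iso.inv_hom_id_assoc, eqToHom_trans_assoc, eqToHom_refl, Category.id_comp]

omit [MonoidalCategory GraphCat] in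
lemma vert_injective : Function.Injective vert := by
  intro a b h
  have := congrArg (fun f : I0 ⟶ I1 => f.toFun PUnit.unit) h
  exact this

end Aux

/-- Let `⊗` be the tensor product of a closed symmetric monoidal structure on the
category of (reflexive) graphs (whose unit is necessarily `I₀`).  Then the four label
morphisms `(s,s), (s,t), (t,s), (t,t) : I₀ ⟶ I₁ ⊗ I₁` are pairwise distinct; i.e. no
vertex of `I₁ ⊗ I₁` carries more than one label.  (Here `s = false`, `t = true`.) -/
theorem labels_injective [MonoidalCategory GraphCat] [SymmetricCategory GraphCat]
    [MonoidalClosed GraphCat] (hU : (𝟙_ GraphCat) = I0) :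
    Function.Injective (fun p : Bool × Bool => lab hU p.1 p.2) := by
  intro p q h
  simp only at h
  have h1 : vert p.1 = vert q.1 := by
    rw [← labR hU p.1 p.2, ← labR hU q.1 q.2, h]
  have h2 : vert p.2 = vert q.2 := by
    rw [← labL hU p.1 p.2, ← labL hU q.1 q.2, h]
  exact Prod.ext (vert_injective h1) (vert_injective h2)
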